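/- Let G be a connected k-regular finite simple graph on n vertices with adjacency matrix A, whose distinct adjacency eigenvalues are k = θ_0 > θ_1 > ... > θ_d with d ≥ 3 and θ_d ≠ −1 and θ_0 > 0. Let Δ_3 = max_{u ∈ V(G)} (A³)_{uu}, and suppose there exists a largest eigenvalue θ_s among θ_0,...,θ_d with θ_s ≤ −(θ_0² + θ_0 θ_d − Δ_3) / (θ_0 (θ_d + 1)), and that s ≥ 1. Then eq_4(G) ≤ n · (Δ_3 − θ_0(θ_s + θ_{s−1} + θ_d) − θ_s θ_{s−1} θ_d) / ((θ_0 − θ_s)(θ_0 − θ_{s−1})(θ_0 − θ_d)). -/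

import Mathlib

open SimpleGraph

/-- `S` is a `t`-equidistant set of `G`: all distinct vertices of `S` are at distance
exactly `t` in `G`. -/
def IsEquidistantSet {V : Type*} (G : SimpleGraph V) (t : ℕ) (S : Finset V) : Prop :=
  (S : Set V).Pairwise fun u v => G.dist u v = t

/-- The `t`-equidistant number of `G`: the maximum size of a `t`-equidistant set. -/
noncomputable def eqNum {V : Type*} [Fintype V] (G : SimpleGraph V) (t : ℕ) : ℕ :=
  sSup {n : ℕ | ∃ S : Finset V, IsEquidistantSet G t S ∧ S.card = n}

/-- `S` is a `t`-independent set of `G`: all distinct vertices of `S` are at pairwise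
distance greater than `t` in `G`. -/
def IsTIndepSet {V : Type*} (G : SimpleGraph V) (t : ℕ) (S : Finset V) : Prop :=
  (S : Set V).Pairwise fun u v => t < G.dist u v

/-- The `t`-independence number of `G`. -/
noncomputable def indepNumT {V : Type*} [Fintype V] (G : SimpleGraph V) (t : ℕ) : ℕ :=
  sSup {n : ℕ | ∃ S : Finset V, IsTIndepSet G t S ∧ S.card = n}

/-- The equidistant number of `G`: `max {eq_t(G) : 1 ≤ t ≤ diam G}`. -/
noncomputable def eqTotalNum {V : Type*} [Fintype V] (G : SimpleGraph V) : ℕ :=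
  (Finset.Icc 1 G.diam).sup (eqNum G)

open Matrix Finset

section Aux

variable {V : Type*} [Fintype V] [DecidableEq V]

private lemma aux_orto (A : Matrix V V ℝ) (hA : A.IsHermitian) (i j : V) :
    ∑ u, hA.eigenvectorBasis i u * hA.eigenvectorBasis j u = if i = j then 1 else 0 := by
  have h := orthonormal_iff_ite.mp hA.eigenvectorBasis.orthonormal i j
  rw [PiLp.inner_apply] at h
  simp at h
  rw [← h]
  exact Finset.sum_congr rfl fun _ _ => mul_comm _ _

private lemma aux_comp (A : Matrix V V ℝ) (hA : A.IsHermitian) (u w : V) :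
    ∑ i, hA.eigenvectorBasis i u * hA.eigenvectorBasis i w = if u = w then 1 else 0 := by
  set B := hA.eigenvectorBasis
  have hPPt : (Matrix.of fun i u => B i u) * (Matrix.of fun i u => B i u)ᵀ = 1 := by
    ext i j
    simpa [Matrix.mul_apply, Matrix.one_apply] using aux_orto A hA i j
  have hPtP := mul_eq_one_comm.mp hPPt
  have h := congrFun (congrFun hPtP u) w
  simpa [Matrix.mul_apply, Matrix.one_apply] using h

private lemma aux_dot (A : Matrix V V ℝ) (hA : A.IsHermitian) (x y : V → ℝ) :
    x ⬝ᵥ y = ∑ i, (∑ u, hA.eigenvectorBasis i u * x u) * (∑ u, hA.eigenvectorBasis i u * y u) := by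
  set B := hA.eigenvectorBasis
  symm
  calc ∑ i, (∑ u, B i u * x u) * (∑ u, B i u * y u)
      = ∑ i, ∑ u, ∑ w, (B i u * x u) * (B i w * y w) := by
        refine Finset.sum_congr rfl fun i _ => ?_
        rw [Finset.sum_mul_sum]
    _ = ∑ u, ∑ w, (x u * y w) * ∑ i, B i u * B i w := by
        rw [Finset.sum_comm]
        refine Finset.sum_congr rfl fun u _ => ?_
        rw [Finset.sum_comm]
        refine Finset.sum_congr rfl fun w _ => ?_
        rw [Finset.mul_sum]
        exact Finset.sum_congr rfl fun i _ => by ring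
    _ = ∑ u, x u * y u := by
        refine Finset.sum_congr rfl fun u _ => ?_
        simp [B, aux_comp A hA, mul_ite]
    _ = x ⬝ᵥ y := rfl

private lemma aux_expand (A : Matrix V V ℝ) (hA : A.IsHermitian) (x : V → ℝ) :
    x = ∑ i, (∑ u, hA.eigenvectorBasis i u * x u) • (⇑(hA.eigenvectorBasis i) : V → ℝ) := by
  set B := hA.eigenvectorBasis
  funext a
  rw [Finset.sum_apply]
  symm
  calc ∑ i, ((∑ u, B i u * x u) • (⇑(B i) : V → ℝ)) a
      = ∑ i, ∑ u, (x u * (B i u * B i a)) := by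
        refine Finset.sum_congr rfl fun i _ => ?_
        simp only [Pi.smul_apply, smul_eq_mul, Finset.sum_mul]
        exact Finset.sum_congr rfl fun u _ => by ring
    _ = ∑ u, x u * ∑ i, B i u * B i a := by
        rw [Finset.sum_comm]
        exact Finset.sum_congr rfl fun u _ => by rw [Finset.mul_sum]
    _ = x a := by simp [B, aux_comp A hA, mul_ite]

private lemma aux_quadform (A : Matrix V V ℝ) (hA : A.IsHermitian) (M : Matrix V V ℝ) (g : V → ℝ)
    (hM : ∀ i, M *ᵥ ⇑(hA.eigenvectorBasis i) = g i • ⇑(hA.eigenvectorBasis i))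
    (x : V → ℝ) :
    x ⬝ᵥ (M *ᵥ x) = ∑ i, g i * (∑ u, hA.eigenvectorBasis i u * x u) ^ 2 := by
  set B := hA.eigenvectorBasis
  set c : V → ℝ := fun i => ∑ u, B i u * x u with hc
  have hMx : M *ᵥ x = ∑ i, c i • (g i • (⇑(B i) : V → ℝ)) := by
    calc M *ᵥ x = M.mulVecLin (∑ i, c i • (⇑(B i) : V → ℝ)) := by
          rw [Matrix.mulVecLin_apply, ← aux_expand A hA x]
      _ = ∑ i, c i • (M.mulVecLin ⇑(B i)) := by
          rw [map_sum]
          exact Finset.sum_congr rfl fun i _ => by rw [LinearMap.map_smul]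
      _ = ∑ i, c i • (g i • (⇑(B i) : V → ℝ)) := by
          exact Finset.sum_congr rfl fun i _ => by rw [Matrix.mulVecLin_apply, hM i]
  rw [hMx]
  calc x ⬝ᵥ (∑ i, c i • (g i • (⇑(B i) : V → ℝ)))
      = ∑ u, ∑ i, x u * (c i * (g i * B i u)) := by
        refine Finset.sum_congr rfl fun u _ => ?_
        rw [Finset.sum_apply]
        simp [Finset.mul_sum]
    _ = ∑ i, (c i * g i) * ∑ u, B i u * x u := by
        rw [Finset.sum_comm]
        refine Finset.sum_congr rfl fun i _ => ?_
        rw [Finset.mul_sum]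
        exact Finset.sum_congr rfl fun u _ => by ring
    _ = ∑ i, g i * c i ^ 2 := by
        refine Finset.sum_congr rfl fun i _ => ?_
        have h : ∑ u, B i u * x u = c i := rfl
        rw [h]; ring

end Aux


set_option maxHeartbeats 1600000 in
/-- best Ratio-type bound for `t = 4`. Let `G` be a connected `k`-regular
graph on `n` vertices with distinct adjacency eigenvalues `k = θ_0 > θ_1 > ⋯ > θ_d`,
`d ≥ 3`, `θ_d ≠ -1`, `θ_0 > 0`. With `Δ_3 = max_u (A³)_{uu}`, let `θ_s` be the largest
eigenvalue with `θ_s ≤ -(θ_0² + θ_0 θ_d - Δ_3)/(θ_0 (θ_d + 1))`, and suppose `s ≥ 1`. Then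
`eq_4(G) ≤ n (Δ_3 - θ_0(θ_s + θ_{s-1} + θ_d) - θ_s θ_{s-1} θ_d)
  / ((θ_0-θ_s)(θ_0-θ_{s-1})(θ_0-θ_d))`. -/
theorem eqNum_four_le_ratio_bound {V : Type*} [Fintype V] [DecidableEq V]
    (G : SimpleGraph V) [DecidableRel G.Adj] (hG : G.Connected)
    (n : ℕ) (hn : Fintype.card V = n)
    (k : ℕ) (hreg : G.IsRegularOfDegree k)
    (hA : (G.adjMatrix ℝ).IsHermitian)
    (d : ℕ) (hd : 3 ≤ d) (θ : ℕ → ℝ)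
    (hθstrict : ∀ j l : ℕ, j < l → l ≤ d → θ l < θ j)
    (hθ0 : θ 0 = (k : ℝ))
    (hspec : {x : ℝ | ∃ j ≤ d, θ j = x} = Set.range hA.eigenvalues)
    (hθd : θ d ≠ -1) (hθ0pos : (0 : ℝ) < θ 0)
    (Δ3 : ℝ) (hΔ3 : IsGreatest (Set.range fun u : V => ((G.adjMatrix ℝ) ^ 3) u u) Δ3)
    (s : ℕ) (hsd : s ≤ d) (hs1 : 1 ≤ s)
    (hsle : θ s ≤ -(θ 0 ^ 2 + θ 0 * θ d - Δ3) / (θ 0 * (θ d + 1)))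
    (hsmax : ∀ j ≤ d, θ j ≤ -(θ 0 ^ 2 + θ 0 * θ d - Δ3) / (θ 0 * (θ d + 1)) → θ j ≤ θ s) :
    (eqNum G 4 : ℝ) ≤
      n * (Δ3 - θ 0 * (θ s + θ (s - 1) + θ d) - θ s * θ (s - 1) * θ d) /
        ((θ 0 - θ s) * (θ 0 - θ (s - 1)) * (θ 0 - θ d)) := by
  classical
  subst hn
  set A := G.adjMatrix ℝ with hAdef
  set B := hA.eigenvectorBasis with hBdef
  set ev := hA.eigenvalues with hevdef
  have hevmem : ∀ i : V, ∃ j ≤ d, θ j = ev i := by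
    intro i
    have h : ev i ∈ Set.range hA.eigenvalues := ⟨i, rfl⟩
    rw [← hspec] at h
    exact h
  have hrange : ∀ j, j ≤ d → ∃ i : V, ev i = θ j := by
    intro j hj
    have h : θ j ∈ Set.range hA.eigenvalues := by rw [← hspec]; exact ⟨j, hj, rfl⟩
    obtain ⟨i, hi⟩ := h
    exact ⟨i, hi⟩
  have heig : ∀ (m : ℕ) (i : V), (A ^ m) *ᵥ ⇑(B i) = (ev i ^ m) • ⇑(B i) := by
    intro m i
    induction m with
    | zero => simp [Matrix.one_mulVec]
    | succ m ih =>
        rw [pow_succ, ← Matrix.mulVec_mulVec, hA.mulVec_eigenvectorBasis, Matrix.mulVec_smul,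
          ih, smul_smul, pow_succ]
        ring_nf
        rfl
  set p : ℝ → ℝ := fun t => (t - θ s) * (t - θ (s - 1)) * (t - θ d) with hp
  set M : Matrix V V ℝ := A ^ 3 - (θ s + θ (s - 1) + θ d) • A ^ 2
      + (θ s * θ (s - 1) + θ s * θ d + θ (s - 1) * θ d) • A ^ 1
      - (θ s * θ (s - 1) * θ d) • (1 : Matrix V V ℝ) with hM
  have hMB : ∀ i, M *ᵥ ⇑(B i) = p (ev i) • ⇑(B i) := by
    intro i
    rw [hM, Matrix.sub_mulVec, Matrix.add_mulVec, Matrix.sub_mulVec,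
        Matrix.smul_mulVec, Matrix.smul_mulVec, Matrix.smul_mulVec,
        heig 3 i, heig 2 i, heig 1 i, Matrix.one_mulVec]
    funext u
    simp only [Pi.smul_apply, Pi.sub_apply, Pi.add_apply, smul_eq_mul, hp]
    ring
  have hA2diag : ∀ u : V, (A ^ 2) u u = (k : ℝ) := by
    intro u
    rw [pow_two, hAdef, SimpleGraph.adjMatrix_mul_self_apply_self, hreg u]
  have hA1diag : ∀ u : V, A u u = 0 := by
    intro u; simp [hAdef]
  have hMdiagval : ∀ u : V, M u u
      = (A ^ 3) u u - θ 0 * (θ s + θ (s - 1) + θ d) - θ s * θ (s - 1) * θ d := by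
    intro u
    rw [hM]
    simp only [Matrix.sub_apply, Matrix.add_apply, Matrix.smul_apply, Matrix.one_apply_eq,
      smul_eq_mul, pow_one, hA2diag u, hA1diag u, hθ0]
    ring
  have hppos : ∀ j, j ≤ d → 0 ≤ p (θ j) := by
    intro j hj
    rcases lt_or_ge j s with hjs | hjs
    · have h1 : 0 < θ j - θ s := sub_pos.mpr (hθstrict j s hjs hsd)
      have h2 : 0 ≤ θ j - θ (s - 1) := by
        rcases lt_or_eq_of_le (Nat.le_sub_one_of_lt hjs) with h | h
        · exact le_of_lt (sub_pos.mpr (hθstrict j (s - 1) h (le_trans (Nat.sub_le s 1) hsd)))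
        · rw [h]; simp
      have h3 : 0 ≤ θ j - θ d := le_of_lt (sub_pos.mpr (hθstrict j d (lt_of_lt_of_le hjs hsd) le_rfl))
      rw [hp]
      exact mul_nonneg (mul_nonneg h1.le h2) h3
    · have h1 : θ j - θ s ≤ 0 := by
        rcases lt_or_eq_of_le hjs with h | h
        · exact le_of_lt (sub_neg.mpr (hθstrict s j h hj))
        · rw [← h]; simp
      have h2 : θ j - θ (s - 1) ≤ 0 := by
        have hlt : s - 1 < j := lt_of_lt_of_le (Nat.sub_lt (by omega) one_pos) hjs
        exact le_of_lt (sub_neg.mpr (hθstrict (s - 1) j hlt hj))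
      have h3 : 0 ≤ θ j - θ d := by
        rcases lt_or_eq_of_le hj with h | h
        · exact le_of_lt (sub_pos.mpr (hθstrict j d h le_rfl))
        · rw [h]; simp
      rw [hp]
      have h12 : 0 ≤ (θ j - θ s) * (θ j - θ (s - 1)) := by
        nlinarith [mul_nonneg (neg_nonneg.mpr h1) (neg_nonneg.mpr h2)]
      exact mul_nonneg h12 h3
  have hpev : ∀ i : V, 0 ≤ p (ev i) := by
    intro i
    obtain ⟨j, hj, hje⟩ := hevmem i
    rw [← hje]
    exact hppos j hj
  have hθdmin : ∀ i : V, θ d ≤ ev i := by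
    intro i
    obtain ⟨j, hj, hje⟩ := hevmem i
    rw [← hje]
    rcases lt_or_eq_of_le hj with h | h
    · exact le_of_lt (hθstrict j d h le_rfl)
    · rw [h]
  have hdiag_qf : ∀ u : V, M u u = ∑ i, p (ev i) * (B i u) ^ 2 := by
    intro u
    have h := aux_quadform A hA M (fun i => p (ev i)) hMB (Pi.single u 1)
    have hL : (Pi.single u (1 : ℝ)) ⬝ᵥ (M *ᵥ Pi.single u 1) = M u u := by
      rw [Matrix.mulVec_single, single_dotProduct]
      simp
    rw [hL] at h
    rw [h]
    refine Finset.sum_congr rfl fun i _ => ?_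
    congr 1
    have hR : ∑ w, B i w * (Pi.single u 1 : V → ℝ) w = B i u := by
      simp [Pi.single_apply]
    rw [hR]
  have hdiag_nonneg : ∀ u : V, 0 ≤ M u u := by
    intro u
    rw [hdiag_qf u]
    exact Finset.sum_nonneg fun i _ => mul_nonneg (hpev i) (sq_nonneg _)
  set N : ℝ := Δ3 - θ 0 * (θ s + θ (s - 1) + θ d) - θ s * θ (s - 1) * θ d with hN
  have hdiag_le : ∀ u : V, M u u ≤ N := by
    intro u
    have h2 : (A ^ 3) u u ≤ Δ3 := hΔ3.2 ⟨u, rfl⟩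
    rw [hMdiagval u, hN]
    linarith
  have hNnonneg : 0 ≤ N := by
    obtain ⟨u0, hu0⟩ := hΔ3.1
    have hu0' : (A ^ 3) u0 u0 = Δ3 := hu0
    have h := hdiag_nonneg u0
    rw [hMdiagval u0, hu0'] at h
    rw [hN]
    linarith
  rcases lt_or_eq_of_le hs1 with hs2 | hs_eq
  · -- 1 < s : the main ratio bound argument
    have hset : eqNum G 4 ∈ {m : ℕ | ∃ S : Finset V, IsEquidistantSet G 4 S ∧ S.card = m} := by
      apply Nat.sSup_mem
      · exact ⟨0, ∅, by simp [IsEquidistantSet], Finset.card_empty⟩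
      · refine ⟨Fintype.card V, fun m hm => ?_⟩
        obtain ⟨S, _, rfl⟩ := hm
        exact Finset.card_le_univ S
    obtain ⟨S, hSequi, hScard⟩ := hset
    set x : V → ℝ := fun u => if u ∈ S then 1 else 0 with hx
    have hpow0 : ∀ m : ℕ, 1 ≤ m → m ≤ 3 → ∀ u v : V, u ∈ S → v ∈ S → u ≠ v →
        (A ^ m) u v = 0 := by
      intro m hm1 hm3 u v hu hv huv
      by_contra hne
      rw [hAdef, SimpleGraph.adjMatrix_pow_apply_eq_card_walk] at hne
      obtain ⟨⟨q, hq⟩⟩ := Fintype.card_pos_iff.mp (Nat.pos_of_ne_zero (Nat.cast_ne_zero.mp hne))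
      have hq' : q.length = m := hq
      have hdist : G.dist u v = 4 :=
        hSequi (Finset.mem_coe.mpr hu) (Finset.mem_coe.mpr hv) huv
      have hle := SimpleGraph.dist_le q
      omega
    have hMoff : ∀ u v : V, u ∈ S → v ∈ S → u ≠ v → M u v = 0 := by
      intro u v hu hv huv
      have h3 := hpow0 3 (by omega) (by omega) u v hu hv huv
      have h2 := hpow0 2 (by omega) (by omega) u v hu hv huv
      have h1 := hpow0 1 (by omega) (by omega) u v hu hv huv
      rw [pow_one] at h1
      rw [hM]
      simp [Matrix.sub_apply, Matrix.add_apply, Matrix.smul_apply, h1, h2, h3,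
        Matrix.one_apply_ne huv]
    have hsum_ind : ∀ g : V → ℝ, ∑ v, x v * g v = ∑ v ∈ S, g v := by
      intro g
      rw [hx]
      simp [ite_mul, one_mul, zero_mul, Finset.sum_ite_mem, Finset.univ_inter]
    have hQeq : x ⬝ᵥ (M *ᵥ x) = ∑ u ∈ S, M u u := by
      calc x ⬝ᵥ (M *ᵥ x) = ∑ u, x u * (∑ v, M u v * x v) := rfl
        _ = ∑ u ∈ S, ∑ v, M u v * x v := hsum_ind _
        _ = ∑ u ∈ S, ∑ v ∈ S, M u v := by
            refine Finset.sum_congr rfl fun u _ => ?_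
            have h : ∑ v, M u v * x v = ∑ v, x v * M u v :=
              Finset.sum_congr rfl fun v _ => mul_comm _ _
            rw [h, hsum_ind]
        _ = ∑ u ∈ S, M u u := by
            refine Finset.sum_congr rfl fun u hu => ?_
            exact Finset.sum_eq_single_of_mem u hu fun v hv hvu => hMoff u v hu hv (Ne.symm hvu)
    have hQup : x ⬝ᵥ (M *ᵥ x) ≤ (S.card : ℝ) * N := by
      rw [hQeq]
      calc ∑ u ∈ S, M u u ≤ ∑ u ∈ S, N := Finset.sum_le_sum fun u _ => hdiag_le u
        _ = (S.card : ℝ) * N := by rw [Finset.sum_const, nsmul_eq_mul]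
    -- column sums of A are k
    have hsymmA : ∀ a b : V, A a b = A b a := by
      intro a b
      rw [hAdef]
      simp only [SimpleGraph.adjMatrix_apply]
      exact if_congr (G.adj_comm a b) rfl rfl
    have hrowsum : ∀ a : V, ∑ b, A a b = (k : ℝ) := by
      intro a
      have h2 : (G.neighborFinset a).card = k := hreg a
      rw [SimpleGraph.neighborFinset_eq_filter] at h2
      rw [hAdef]
      simp [SimpleGraph.adjMatrix_apply, Finset.sum_boole, h2]
    have hcolsum : ∀ b : V, ∑ a, A a b = (k : ℝ) := by
      intro b
      rw [← hrowsum b]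
      exact Finset.sum_congr rfl fun a _ => hsymmA a b
    have hb0 : ∀ i : V, ev i ≠ θ 0 → ∑ a, B i a = 0 := by
      intro i hne
      have h1 : ∑ a, (A *ᵥ ⇑(B i)) a = ev i * ∑ a, B i a := by
        rw [hA.mulVec_eigenvectorBasis i]
        simp [Finset.mul_sum]
        rfl
      have h2 : ∑ a, (A *ᵥ ⇑(B i)) a = (k : ℝ) * ∑ a, B i a := by
        calc ∑ a, (A *ᵥ ⇑(B i)) a = ∑ a, ∑ b, A a b * B i b := by
              simp [Matrix.mulVec, dotProduct]
          _ = ∑ b, (∑ a, A a b) * B i b := by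
              rw [Finset.sum_comm]
              exact Finset.sum_congr rfl fun b _ => (Finset.sum_mul _ _ _).symm
          _ = ∑ b, (k : ℝ) * B i b := Finset.sum_congr rfl fun b _ => by rw [hcolsum b]
          _ = (k : ℝ) * ∑ b, B i b := (Finset.mul_sum _ _ _).symm
      have h3 : (ev i - θ 0) * ∑ a, B i a = 0 := by
        rw [hθ0]
        have := h1.symm.trans h2
        nlinarith [this]
      rcases mul_eq_zero.mp h3 with h | h
      · exact absurd (by linarith [sub_eq_zero.mp h] : ev i = θ 0) hne
      · exact h
    set T : Finset V := Finset.univ.filter (fun i => ev i = θ 0) with hT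
    have hcard_eq : (S.card : ℝ) = ∑ i, (∑ a, B i a * x a) * (∑ a, B i a * 1) := by
      have h := aux_dot A hA x (fun _ => 1)
      rw [← h]
      have : x ⬝ᵥ (fun _ => (1 : ℝ)) = ∑ u, x u * 1 := rfl
      rw [this]
      simp [hx, Finset.sum_ite_mem, Finset.univ_inter]
    have hcardT : (S.card : ℝ) = ∑ i ∈ T, (∑ a, B i a * x a) * (∑ a, B i a * 1) := by
      rw [hcard_eq]
      symm
      apply Finset.sum_subset (Finset.filter_subset _ _)
      intro i _ hiT
      have hne : ev i ≠ θ 0 := by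
        intro h
        exact hiT (Finset.mem_filter.mpr ⟨Finset.mem_univ i, h⟩)
      have hb := hb0 i hne
      have : ∑ a, B i a * (1 : ℝ) = 0 := by simpa using hb
      rw [this, mul_zero]
    have hCS := Finset.sum_mul_sq_le_sq_mul_sq T (fun i => ∑ a, B i a * x a)
      (fun i => ∑ a, B i a * 1)
    have hbbtot : ∑ i, (∑ a, B i a * (1 : ℝ)) ^ 2 = (Fintype.card V : ℝ) := by
      have h := aux_dot A hA (fun _ : V => (1 : ℝ)) (fun _ : V => (1 : ℝ))
      have hL : (fun _ : V => (1 : ℝ)) ⬝ᵥ (fun _ : V => (1 : ℝ)) = (Fintype.card V : ℝ) := by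
        simp [dotProduct]
      rw [hL] at h
      rw [h]
      refine Finset.sum_congr rfl fun i _ => ?_
      rw [pow_two]
    have hbbT : ∑ i ∈ T, (∑ a, B i a * (1 : ℝ)) ^ 2 ≤ (Fintype.card V : ℝ) := by
      rw [← hbbtot]
      exact Finset.sum_le_sum_of_subset_of_nonneg (Finset.filter_subset _ _)
        (fun i _ _ => sq_nonneg _)
    have hp0 : 0 < (θ 0 - θ s) * (θ 0 - θ (s - 1)) * (θ 0 - θ d) := by
      have h1 : θ s < θ 0 := hθstrict 0 s (by omega) hsd
      have h2 : θ (s - 1) < θ 0 := hθstrict 0 (s - 1) (by omega) (le_trans (Nat.sub_le s 1) hsd)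
      have h3 : θ d < θ 0 := hθstrict 0 d (by omega) le_rfl
      exact mul_pos (mul_pos (by linarith) (by linarith)) (by linarith)
    have hp0' : 0 < p (θ 0) := hp0
    have hQlow : x ⬝ᵥ (M *ᵥ x) ≥ p (θ 0) * ∑ i ∈ T, (∑ a, B i a * x a) ^ 2 := by
      have hQ := aux_quadform A hA M (fun i => p (ev i)) hMB x
      rw [hQ]
      calc p (θ 0) * ∑ i ∈ T, (∑ a, B i a * x a) ^ 2
          = ∑ i ∈ T, p (ev i) * (∑ a, B i a * x a) ^ 2 := by
            rw [Finset.mul_sum]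
            refine Finset.sum_congr rfl fun i hi => ?_
            have : ev i = θ 0 := (Finset.mem_filter.mp hi).2
            rw [this]
        _ ≤ ∑ i, p (ev i) * (∑ a, B i a * x a) ^ 2 :=
            Finset.sum_le_sum_of_subset_of_nonneg (Finset.filter_subset _ _)
              (fun i _ _ => mul_nonneg (hpev i) (sq_nonneg _))
    -- combine
    have hT_nonneg : 0 ≤ ∑ i ∈ T, (∑ a, B i a * x a) ^ 2 :=
      Finset.sum_nonneg fun i _ => sq_nonneg _
    have hmain : p (θ 0) * (S.card : ℝ) ^ 2 ≤ (Fintype.card V : ℝ) * ((S.card : ℝ) * N) := by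
      have hc2 : ((S.card : ℝ)) ^ 2 ≤ (∑ i ∈ T, (∑ a, B i a * x a) ^ 2) * (Fintype.card V : ℝ) := by
        calc ((S.card : ℝ)) ^ 2
            = (∑ i ∈ T, (∑ a, B i a * x a) * (∑ a, B i a * 1)) ^ 2 := by rw [← hcardT]
          _ ≤ (∑ i ∈ T, (∑ a, B i a * x a) ^ 2) * (∑ i ∈ T, (∑ a, B i a * (1 : ℝ)) ^ 2) := hCS
          _ ≤ (∑ i ∈ T, (∑ a, B i a * x a) ^ 2) * (Fintype.card V : ℝ) :=
              mul_le_mul_of_nonneg_left hbbT hT_nonneg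
      calc p (θ 0) * (S.card : ℝ) ^ 2
          ≤ p (θ 0) * ((∑ i ∈ T, (∑ a, B i a * x a) ^ 2) * (Fintype.card V : ℝ)) :=
            mul_le_mul_of_nonneg_left hc2 hp0'.le
        _ = (p (θ 0) * ∑ i ∈ T, (∑ a, B i a * x a) ^ 2) * (Fintype.card V : ℝ) := by ring
        _ ≤ (x ⬝ᵥ (M *ᵥ x)) * (Fintype.card V : ℝ) :=
            mul_le_mul_of_nonneg_right hQlow (Nat.cast_nonneg _)
        _ ≤ ((S.card : ℝ) * N) * (Fintype.card V : ℝ) :=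
            mul_le_mul_of_nonneg_right hQup (Nat.cast_nonneg _)
        _ = (Fintype.card V : ℝ) * ((S.card : ℝ) * N) := by ring
    -- final arithmetic
    rw [← hScard]
    rw [le_div_iff₀ hp0]
    rcases Nat.eq_zero_or_pos S.card with h0 | hposc
    · rw [h0]
      simp only [Nat.cast_zero, zero_mul]
      have : (0 : ℝ) ≤ (Fintype.card V : ℝ) * N := mul_nonneg (Nat.cast_nonneg _) hNnonneg
      linarith
    · have hcpos : (0 : ℝ) < (S.card : ℝ) := by exact_mod_cast hposc
      have h' : ((S.card : ℝ) * p (θ 0)) * (S.card : ℝ)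
          ≤ (((Fintype.card V : ℝ)) * N) * (S.card : ℝ) := by nlinarith [hmain]
      have := le_of_mul_le_mul_right h' hcpos
      calc (S.card : ℝ) * ((θ 0 - θ s) * (θ 0 - θ (s - 1)) * (θ 0 - θ d))
          = (S.card : ℝ) * p (θ 0) := by rw [hp]
        _ ≤ (Fintype.card V : ℝ) * N := this
        _ = (Fintype.card V : ℝ) * (Δ3 - θ 0 * (θ s + θ (s - 1) + θ d) - θ s * θ (s - 1) * θ d) := by
            rw [hN]
  · -- s = 1 : the hypotheses are contradictory
    exfalso
    -- θ d < -1
    have hNontriv : Nontrivial V := by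
      obtain ⟨i0, hi0⟩ := hrange 0 (Nat.zero_le d)
      obtain ⟨idd, hidd⟩ := hrange d le_rfl
      refine ⟨i0, idd, fun h => ?_⟩
      rw [h, hidd] at hi0
      have := hθstrict 0 d (by omega) le_rfl
      linarith
    obtain ⟨u, w, huw⟩ : ∃ u w : V, G.Adj u w := by
      obtain ⟨u, w, huw⟩ := exists_pair_ne V
      obtain ⟨pwalk⟩ := hG.preconnected u w
      cases pwalk with
      | nil => exact absurd rfl huw
      | cons h q => exact ⟨_, _, h⟩
    set y : V → ℝ := Pi.single u 1 - Pi.single w 1 with hy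
    have hQA := aux_quadform A hA A ev (fun i => hA.mulVec_eigenvectorBasis i) y
    have hPar := aux_quadform A hA 1 (fun _ => 1)
      (fun i => by rw [Matrix.one_mulVec, one_smul]) y
    rw [Matrix.one_mulVec] at hPar
    have hydot : ∀ f : V → ℝ, y ⬝ᵥ f = f u - f w := by
      intro f
      rw [hy, sub_dotProduct, single_dotProduct, single_dotProduct]
      ring
    have hne_uw : u ≠ w := G.ne_of_adj huw
    have hyy : y ⬝ᵥ y = 2 := by
      rw [hydot y, hy]
      simp [Pi.single_apply, hne_uw, Ne.symm hne_uw]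
      norm_num
    have hAuw : A u w = 1 := by rw [hAdef]; simp [huw]
    have hAwu : A w u = 1 := by rw [hAdef]; simp [huw.symm]
    have hAy : y ⬝ᵥ (A *ᵥ y) = -2 := by
      rw [hydot (A *ᵥ y), hy, Matrix.mulVec_sub, Matrix.mulVec_single, Matrix.mulVec_single]
      simp only [Pi.sub_apply, Pi.smul_apply, Matrix.col_apply, op_smul_eq_mul]
      rw [hA1diag u, hA1diag w] at *
      simp [hAuw, hAwu, hA1diag u, hA1diag w]
      norm_num
    have hθdle : θ d ≤ -1 := by
      have hsum_ge : θ d * (y ⬝ᵥ y) ≤ y ⬝ᵥ (A *ᵥ y) := by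
        rw [hQA, hPar, Finset.mul_sum]
        refine Finset.sum_le_sum fun i _ => ?_
        have h1 := hθdmin i
        have h2 : (0 : ℝ) ≤ (∑ a, B i a * y a) ^ 2 := sq_nonneg _
        nlinarith
      rw [hyy, hAy] at hsum_ge
      linarith
    have hθdlt : θ d < -1 := lt_of_le_of_ne hθdle hθd
    -- from hsle with s = 1 : N ≤ 0
    have hs1' : s = 1 := hs_eq.symm
    subst hs1'
    have h11 : (1 : ℕ) - 1 = 0 := rfl
    rw [h11] at hN
    have hdenneg : θ 0 * (θ d + 1) < 0 := mul_neg_of_pos_of_neg hθ0pos (by linarith)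
    have hkey : -(θ 0 ^ 2 + θ 0 * θ d - Δ3) ≤ θ 1 * (θ 0 * (θ d + 1)) :=
      (le_div_iff_of_neg hdenneg).mp hsle
    have hN0 : N ≤ 0 := by rw [hN]; nlinarith [hkey]
    have hM0 : ∀ u : V, M u u = 0 := fun u =>
      le_antisymm (le_trans (hdiag_le u) hN0) (hdiag_nonneg u)
    have htrace : ∑ u, M u u = ∑ i, p (ev i) := by
      calc ∑ u, M u u = ∑ u, ∑ i, p (ev i) * (B i u) ^ 2 :=
            Finset.sum_congr rfl fun u _ => hdiag_qf u
        _ = ∑ i, p (ev i) * ∑ u, (B i u) ^ 2 := by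
            rw [Finset.sum_comm]
            exact Finset.sum_congr rfl fun i _ => (Finset.mul_sum _ _ _).symm
        _ = ∑ i, p (ev i) := by
            refine Finset.sum_congr rfl fun i _ => ?_
            have h := aux_orto A hA i i
            simp only [if_pos rfl] at h
            have h2 : ∑ u, (B i u) ^ 2 = 1 := by
              calc ∑ u, (B i u) ^ 2 = ∑ u, B i u * B i u :=
                    Finset.sum_congr rfl fun u _ => pow_two _
                _ = 1 := h
            rw [h2, mul_one]
    have hsum0 : ∑ i, p (ev i) = 0 := by
      rw [← htrace]
      exact Finset.sum_eq_zero fun u _ => hM0 u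
    have hall0 : ∀ i : V, p (ev i) = 0 := fun i =>
      (Finset.sum_eq_zero_iff_of_nonneg fun i _ => hpev i).mp hsum0 i (Finset.mem_univ i)
    obtain ⟨i2, hi2⟩ := hrange 2 (by omega)
    have hzero := hall0 i2
    rw [hi2, hp] at hzero
    simp only [h11] at hzero
    have f1 : θ 2 - θ 1 ≠ 0 := sub_ne_zero.mpr (ne_of_lt (hθstrict 1 2 (by omega) (by omega)))
    have f2 : θ 2 - θ 0 ≠ 0 := sub_ne_zero.mpr (ne_of_lt (hθstrict 0 2 (by omega) (by omega)))
    have f3 : θ 2 - θ d ≠ 0 := sub_ne_zero.mpr (ne_of_gt (hθstrict 2 d (by omega) le_rfl))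
    exact (mul_ne_zero (mul_ne_zero f1 f2) f3) hzero
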